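/- Adding a nondominated point strictly decreases R2: if Y ⊆ (0,∞)² is finite nonempty and z ∈ (0,∞)² satisfies that no y ∈ Y has y₁ ≤ z₁ and y₂ ≤ z₂ (z is not weakly dominated), then R2(Y ∪ {z}) < R2(Y). -/

import Mathlib

open Set

lemma iInf_subtype_eq_inf' {ι : Type*} (s : Set ι) (hfin : s.Finite) (hne : s.Nonempty)
    (f : ι → ℝ) :
    (⨅ y : s, f y) = hfin.toFinset.inf' (by simpa using hne) f := by
  rw [Finset.inf'_eq_csInf_image]
  simp only [Set.Finite.coe_toFinset, iInf]
  congr 1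
  ext x
  simp only [Set.mem_range, Set.mem_image, Subtype.exists, exists_prop]

theorem r2_strict_decrease_nondominated (Y : Set (ℝ × ℝ)) (hfin : Y.Finite)
    (hne : Y.Nonempty) (hpos : ∀ y ∈ Y, 0 < y.1 ∧ 0 < y.2)
    (z : ℝ × ℝ) (hz : 0 < z.1 ∧ 0 < z.2)
    (hnondom : ∀ y ∈ Y, ¬ (y.1 ≤ z.1 ∧ y.2 ≤ z.2)) :
    (∫ w in (0:ℝ)..1, ⨅ y : (insert z Y : Set (ℝ × ℝ)),
        max (w * (y : ℝ × ℝ).1) ((1 - w) * (y : ℝ × ℝ).2)) <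
    (∫ w in (0:ℝ)..1, ⨅ y : Y, max (w * (y : ℝ × ℝ).1) ((1 - w) * (y : ℝ × ℝ).2)) := by
  have hfin' : (insert z Y).Finite := hfin.insert z
  have hne' : (insert z Y).Nonempty := Set.insert_nonempty z Y
  set t : Finset (ℝ × ℝ) := hfin.toFinset with ht
  set t' : Finset (ℝ × ℝ) := hfin'.toFinset with ht'
  have htne : t.Nonempty := by simpa [ht] using hne
  have htne' : t'.Nonempty := by simpa [ht'] using hne'
  have hmem : ∀ y, y ∈ t ↔ y ∈ Y := by simp [ht]
  have hmem' : ∀ y, y ∈ t' ↔ y ∈ insert z Y := by simp [ht']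
  set F : (ℝ × ℝ) → ℝ → ℝ := fun y w => max (w * y.1) ((1 - w) * y.2) with hF
  have heq1 : ∀ w : ℝ, (⨅ y : Y, max (w * (y : ℝ × ℝ).1) ((1 - w) * (y : ℝ × ℝ).2))
      = t.inf' htne (fun y => F y w) := fun w =>
    iInf_subtype_eq_inf' Y hfin hne (fun y => F y w)
  have heq2 : ∀ w : ℝ, (⨅ y : (insert z Y : Set (ℝ × ℝ)),
        max (w * (y : ℝ × ℝ).1) ((1 - w) * (y : ℝ × ℝ).2))
      = t'.inf' htne' (fun y => F y w) := fun w =>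
    iInf_subtype_eq_inf' _ hfin' hne' (fun y => F y w)
  simp only [heq1, heq2]
  -- continuity
  have hFc : ∀ y : ℝ × ℝ, Continuous (F y) := by
    intro y
    exact Continuous.max (by fun_prop) (by fun_prop)
  have hc : Continuous (fun w => t.inf' htne (fun y => F y w)) :=
    continuous_iff_continuousAt.2 fun x =>
      ContinuousAt.finset_inf'_apply htne fun i _ => (hFc i).continuousAt
  have hc' : Continuous (fun w => t'.inf' htne' (fun y => F y w)) :=
    continuous_iff_continuousAt.2 fun x =>
      ContinuousAt.finset_inf'_apply htne' fun i _ => (hFc i).continuousAt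
  -- pointwise ≤
  have hle : ∀ w : ℝ, t'.inf' htne' (fun y => F y w) ≤ t.inf' htne (fun y => F y w) := by
    intro w
    apply Finset.le_inf'
    intro y hy
    exact Finset.inf'_le _ (by rw [hmem'] at *; exact Set.mem_insert_of_mem z ((hmem y).1 hy))
  -- strict at w*
  obtain ⟨hz1, hz2⟩ := hz
  have hsum : 0 < z.1 + z.2 := by linarith
  set w₀ : ℝ := z.2 / (z.1 + z.2) with hw₀
  have hw₀pos : 0 < w₀ := div_pos hz2 hsum
  have hw₀lt : w₀ < 1 := by
    rw [hw₀, div_lt_one hsum]; linarith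
  have h1w : 1 - w₀ = z.1 / (z.1 + z.2) := by
    rw [hw₀]; field_simp; ring
  have hkey : w₀ * z.1 = (1 - w₀) * z.2 := by
    rw [h1w, hw₀]; field_simp
  have hFz : F z w₀ = w₀ * z.1 := by
    simp only [hF, ← hkey, max_self]
  have hstrict : t'.inf' htne' (fun y => F y w₀) < t.inf' htne (fun y => F y w₀) := by
    have h1 : t'.inf' htne' (fun y => F y w₀) ≤ w₀ * z.1 := by
      rw [← hFz]
      exact Finset.inf'_le _ (by rw [hmem']; exact Set.mem_insert z Y)
    have h2 : w₀ * z.1 < t.inf' htne (fun y => F y w₀) := by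
      rw [Finset.lt_inf'_iff]
      intro y hy
      have hyY : y ∈ Y := (hmem y).1 hy
      have := hnondom y hyY
      rcases lt_or_ge z.1 y.1 with h | h
      · have : w₀ * z.1 < w₀ * y.1 := (mul_lt_mul_iff_right₀ hw₀pos).2 h
        exact lt_of_lt_of_le this (le_max_left _ _)
      · have h2' : z.2 < y.2 := by
          by_contra hcon
          push_neg at hcon
          exact this ⟨h, hcon⟩
        have : w₀ * z.1 < (1 - w₀) * y.2 := by
          rw [hkey]
          exact (mul_lt_mul_iff_right₀ (by linarith)).2 h2'
        exact lt_of_lt_of_le this (le_max_right _ _)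
    exact lt_of_le_of_lt h1 h2
  apply intervalIntegral.integral_lt_integral_of_continuousOn_of_le_of_exists_lt
    (by norm_num) hc'.continuousOn hc.continuousOn (fun x _ => hle x)
  exact ⟨w₀, ⟨hw₀pos.le, hw₀lt.le⟩, hstrict⟩
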